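/- Two vectors u, v in the free module on B are congruent via S-rewriting steps if and only if they are congruent via positive S-rewriting steps, if and only if their images in the quotient module ⟨B⟩_k / ⟨R ⊔ E⟩_k coincide. In particular, the equivalence relations generated by all S-rewriting steps and by positive S-rewriting steps agree. -/

import Mathlib

variable {k : Type*} [CommRing k] {B : Type*}

/-- One generating step of the linear `E`-congruence on the free module
`B →₀ k`: a monomial-invertible relation `b → λ·b'` of `E`, applied linearly
inside a vector. -/
def EStepV (Erel : B → B → kˣ → Prop) (u v : B →₀ k) : Prop :=
  ∃ (b b' : B) (lam : kˣ) (μ : k) (w : B →₀ k),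
    Erel b b' lam ∧ u = w + μ • Finsupp.single b 1 ∧
      v = w + (μ * (lam : k)) • Finsupp.single b' 1

/-- The `E`-congruence `~_E` on the free module: the equivalence generated
linearly by the monomial-invertible relations of `E`. -/
def ECong (Erel : B → B → kˣ → Prop) : (B →₀ k) → (B →₀ k) → Prop :=
  Relation.EqvGen (EStepV Erel)

/-- Projective `E`-congruence of monomials: `b ~_E b'` up to an invertible
scalar. -/
def ProjE (Erel : B → B → kˣ → Prop) (b b' : B) : Prop :=
  ∃ lam : kˣ, ECong Erel (Finsupp.single b (1 : k)) ((lam : k) • Finsupp.single b' 1)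

/-- The `E`-projective support of a vector: all monomials projectively
`E`-congruent to a monomial of its ordinary support. -/
def SuppE (Erel : B → B → kˣ → Prop) (v : B →₀ k) : Set B :=
  {b | ∃ b' ∈ v.support, ProjE Erel b b'}

/-- An `S`-rewriting step of the linear rewriting system modulo `S = (R, E)`:
`u ~_E λ·s(r) + v → λ·t(r) + v ~_E w` for a relation `r : b → t` of `R` and
`λ ≠ 0`. -/
def SStepL (Rrel : B → (B →₀ k) → Prop) (Erel : B → B → kˣ → Prop)
    (u w : B →₀ k) : Prop :=
  ∃ (b : B) (t : B →₀ k) (lam : k) (v : B →₀ k),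
    lam ≠ 0 ∧ Rrel b t ∧
      ECong Erel u (lam • Finsupp.single b 1 + v) ∧
      ECong Erel (lam • t + v) w

/-- A positive `S`-rewriting step: moreover the rewritten monomial `s(r)` does
not occur, up to projective `E`-congruence, in the remainder `v`. -/
def PosStepL (Rrel : B → (B →₀ k) → Prop) (Erel : B → B → kˣ → Prop)
    (u w : B →₀ k) : Prop :=
  ∃ (b : B) (t : B →₀ k) (lam : k) (v : B →₀ k),
    lam ≠ 0 ∧ Rrel b t ∧ b ∉ SuppE Erel v ∧
      ECong Erel u (lam • Finsupp.single b 1 + v) ∧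
      ECong Erel (lam • t + v) w

/-- The submodule `⟨R ⊔ E⟩_k` of the free module `⟨B⟩_k`, generated by the
differences `s(r) − t(r)` for the relations of `R` and `E`. -/
noncomputable def NSub (Rrel : B → (B →₀ k) → Prop) (Erel : B → B → kˣ → Prop) :
    Submodule k (B →₀ k) :=
  Submodule.span k
    ({x | ∃ b t, Rrel b t ∧ x = Finsupp.single b 1 - t} ∪
     {x | ∃ (b b' : B) (lam : kˣ), Erel b b' lam ∧
        x = Finsupp.single b (1 : k) - (lam : k) • Finsupp.single b' 1})

section Aux

open Relation

variable {k : Type*} [CommRing k] {B : Type*}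
variable (Erel : B → B → kˣ → Prop) (Rrel : B → (B →₀ k) → Prop)

lemma eCong_of_eq {u v : B →₀ k} (h : u = v) : ECong Erel u v := h ▸ EqvGen.refl u

lemma eStep_add_left (x : B →₀ k) {u v : B →₀ k} (h : EStepV Erel u v) :
    EStepV Erel (x + u) (x + v) := by
  obtain ⟨b, b', lam, μ, w, he, hu, hv⟩ := h
  exact ⟨b, b', lam, μ, x + w, he, by rw [hu, add_assoc], by rw [hv, add_assoc]⟩

lemma eCong_add_left (x : B →₀ k) {u v : B →₀ k} (h : ECong Erel u v) :
    ECong Erel (x + u) (x + v) := by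
  induction h with
  | rel a c h => exact EqvGen.rel _ _ (eStep_add_left Erel x h)
  | refl a => exact EqvGen.refl _
  | symm a c _ ih => exact EqvGen.symm _ _ ih
  | trans a c d _ _ ih1 ih2 => exact EqvGen.trans _ _ _ ih1 ih2

lemma eCong_smul (c : k) {u v : B →₀ k} (h : ECong Erel u v) :
    ECong Erel (c • u) (c • v) := by
  induction h with
  | rel a d h =>
      obtain ⟨b, b', lam, μ, w, he, hu, hv⟩ := h
      refine EqvGen.rel _ _ ⟨b, b', lam, c * μ, c • w, he, ?_, ?_⟩
      · rw [hu, smul_add, smul_smul]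
      · rw [hv, smul_add, smul_smul, mul_assoc]
  | refl a => exact EqvGen.refl _
  | symm a d _ ih => exact EqvGen.symm _ _ ih
  | trans a d e _ _ ih1 ih2 => exact EqvGen.trans _ _ _ ih1 ih2

lemma notMem_suppE_add {b : B} {x y : B →₀ k} (hx : b ∉ SuppE Erel x)
    (hy : b ∉ SuppE Erel y) : b ∉ SuppE Erel (x + y) := by
  classical
  rintro ⟨b', hb', hp⟩
  rcases Finset.mem_union.mp (Finsupp.support_add hb') with h | h
  · exact hx ⟨b', h, hp⟩
  · exact hy ⟨b', h, hp⟩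

lemma notMem_suppE_smul {b : B} (c : k) {x : B →₀ k} (hx : b ∉ SuppE Erel x) :
    b ∉ SuppE Erel (c • x) := by
  rintro ⟨b', hb', hp⟩
  exact hx ⟨b', Finsupp.support_smul hb', hp⟩

/-- Decomposition of a vector into its part E-congruent to a multiple of
`single b` and a remainder avoiding `b` projectively. -/
lemma eCong_decomp (b : B) (v : B →₀ k) :
    ∃ (c : k) (g : B →₀ k), ECong Erel v (c • Finsupp.single b 1 + g) ∧
      b ∉ SuppE Erel g := by
  classical
  induction v using Finsupp.induction with
  | zero =>
      refine ⟨0, 0, eCong_of_eq Erel (by simp), ?_⟩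
      rintro ⟨b', hb', _⟩; simp at hb'
  | single_add a r f _ hr ih =>
      obtain ⟨c, g, hcg, hg⟩ := ih
      by_cases hp : ProjE Erel b a
      · obtain ⟨lam, hlam⟩ := hp
        refine ⟨c + r * ((lam⁻¹ : kˣ) : k), g, ?_, hg⟩
        have h1 : ECong Erel ((r * ((lam⁻¹ : kˣ) : k)) • Finsupp.single b 1)
            (Finsupp.single a r) := by
          have h2 := eCong_smul Erel (r * ((lam⁻¹ : kˣ) : k)) hlam
          have h3 : (r * ((lam⁻¹ : kˣ) : k)) • ((lam : k) • Finsupp.single a (1 : k))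
              = Finsupp.single a r := by
            rw [smul_smul, mul_assoc, Units.inv_mul, mul_one, Finsupp.smul_single, smul_eq_mul,
              mul_one]
          rwa [h3] at h2
        refine EqvGen.trans _ _ _ (eCong_add_left Erel (Finsupp.single a r) hcg) ?_
        refine EqvGen.trans _ _ _ (eCong_of_eq Erel (add_comm _ _)) ?_
        refine EqvGen.trans _ _ _
          (eCong_add_left Erel (c • Finsupp.single b 1 + g) (EqvGen.symm _ _ h1)) ?_
        exact eCong_of_eq Erel (by rw [add_smul]; abel)
      · refine ⟨c, Finsupp.single a r + g, ?_, ?_⟩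
        · refine EqvGen.trans _ _ _ (eCong_add_left Erel (Finsupp.single a r) hcg) ?_
          exact eCong_of_eq Erel (by abel)
        · rintro ⟨b', hb', hpb⟩
          rcases Finset.mem_union.mp (Finsupp.support_add hb') with h | h
          · have : b' = a := by
              have := Finsupp.support_single_subset h
              simpa using this
            exact hp (this ▸ hpb)
          · exact hg ⟨b', h, hpb⟩

lemma mem_R_gen {b : B} {t : B →₀ k} (hR : Rrel b t) :
    Finsupp.single b 1 - t ∈ NSub Rrel Erel :=
  Submodule.subset_span (Or.inl ⟨b, t, hR, rfl⟩)

lemma mem_E_gen {b b' : B} {lam : kˣ} (hE : Erel b b' lam) :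
    Finsupp.single b (1 : k) - (lam : k) • Finsupp.single b' 1 ∈ NSub Rrel Erel :=
  Submodule.subset_span (Or.inr ⟨b, b', lam, hE, rfl⟩)

lemma eCong_sub_mem {u v : B →₀ k} (h : ECong Erel u v) :
    u - v ∈ NSub Rrel Erel := by
  induction h with
  | rel a c h =>
      obtain ⟨b, b', lam, μ, w, he, hu, hv⟩ := h
      have : a - c = μ • (Finsupp.single b (1 : k) - (lam : k) • Finsupp.single b' 1) := by
        rw [hu, hv]; module
      rw [this]
      exact Submodule.smul_mem _ μ (mem_E_gen Erel Rrel he)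
  | refl a => simp
  | symm a c _ ih => simpa [neg_sub] using Submodule.neg_mem _ ih
  | trans a c d _ _ ih1 ih2 => simpa using Submodule.add_mem _ ih1 ih2

lemma sStep_sub_mem {u w : B →₀ k} (h : SStepL Rrel Erel u w) :
    u - w ∈ NSub Rrel Erel := by
  obtain ⟨b, t, lam, v, _, hR, h1, h2⟩ := h
  have key : u - w = (u - (lam • Finsupp.single b 1 + v)) +
      lam • (Finsupp.single b 1 - t) + ((lam • t + v) - w) := by module
  rw [key]
  exact Submodule.add_mem _ (Submodule.add_mem _ (eCong_sub_mem Erel Rrel h1)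
    (Submodule.smul_mem _ lam (mem_R_gen Erel Rrel hR))) (eCong_sub_mem Erel Rrel h2)

lemma mem_to_eqvGen {u v : B →₀ k} (h : u - v ∈ NSub Rrel Erel) :
    Relation.EqvGen (fun a c => SStepL Rrel Erel a c ∨ ECong Erel a c) u v := by
  have key : ∀ n ∈ NSub Rrel Erel, ∀ (c : k) (x : B →₀ k),
      Relation.EqvGen (fun a c => SStepL Rrel Erel a c ∨ ECong Erel a c) x (x + c • n) := by
    intro n hn
    induction hn using Submodule.span_induction with
    | mem g hg =>
        rcases hg with ⟨b, t, hR, rfl⟩ | ⟨b, b', lam, hE, rfl⟩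
        · intro c x
          by_cases hc : c = 0
          · subst hc; simpa using EqvGen.refl x
          · refine EqvGen.symm _ _ (EqvGen.rel _ _ (Or.inl
              ⟨b, t, c, x - c • t, hc, hR, eCong_of_eq Erel (by module),
                eCong_of_eq Erel (by module)⟩))
        · intro c x
          refine EqvGen.symm _ _ (EqvGen.rel _ _ (Or.inr (EqvGen.rel _ _
            ⟨b, b', lam, c, x - (c * (lam : k)) • Finsupp.single b' 1, hE, ?_, ?_⟩)))
          · module
          · module
    | zero => intro c x; simpa using EqvGen.refl x
    | add n m hn hm ihn ihm =>
        intro c x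
        refine EqvGen.trans _ _ _ (ihn c x) ?_
        have := ihm c (x + c • n)
        rwa [smul_add, ← add_assoc]
    | smul d n hn ih =>
        intro c x
        rw [smul_smul]
        exact ih (c * d) x
  have h1 := key _ h 1 v
  rw [one_smul, add_sub_cancel] at h1
  exact EqvGen.symm _ _ h1

lemma eqvGen_lift {α : Type*} {r r' : α → α → Prop}
    (h : ∀ a b, r a b → Relation.EqvGen r' a b) {a b : α}
    (hab : Relation.EqvGen r a b) : Relation.EqvGen r' a b := by
  induction hab with
  | rel a b h' => exact h a b h'
  | refl a => exact EqvGen.refl a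
  | symm a b _ ih => exact EqvGen.symm _ _ ih
  | trans a b c _ _ ih1 ih2 => exact EqvGen.trans _ _ _ ih1 ih2

lemma sStep_to_pos (hadapted : ∀ b t, Rrel b t → b ∉ SuppE Erel t)
    {u w : B →₀ k} (h : SStepL Rrel Erel u w) :
    Relation.EqvGen (fun a c => PosStepL Rrel Erel a c ∨ ECong Erel a c) u w := by
  obtain ⟨b, t, lam, v, hlam, hR, h1, h2⟩ := h
  obtain ⟨c, g, hvg, hg⟩ := eCong_decomp Erel b v
  set X : B →₀ k := (lam + c) • t + g with hX
  have hu : ECong Erel u ((lam + c) • Finsupp.single b 1 + g) := by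
    refine EqvGen.trans _ _ _ h1 (EqvGen.trans _ _ _
      (eCong_add_left Erel (lam • Finsupp.single b 1) hvg) ?_)
    exact eCong_of_eq Erel (by rw [add_smul]; abel)
  have hu' : Relation.EqvGen (fun a c => PosStepL Rrel Erel a c ∨ ECong Erel a c) u X := by
    by_cases h0 : lam + c = 0
    · refine EqvGen.rel _ _ (Or.inr (EqvGen.trans _ _ _ hu (eCong_of_eq Erel ?_)))
      rw [hX, h0]; simp
    · exact EqvGen.rel _ _ (Or.inl ⟨b, t, lam + c, g, h0, hR, hg, hu, EqvGen.refl _⟩)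
  have hw0 : ECong Erel w (c • Finsupp.single b 1 + (lam • t + g)) := by
    refine EqvGen.trans _ _ _ (EqvGen.symm _ _ h2) (EqvGen.trans _ _ _
      (eCong_add_left Erel (lam • t) hvg) ?_)
    exact eCong_of_eq Erel (by abel)
  have hw' : Relation.EqvGen (fun a c => PosStepL Rrel Erel a c ∨ ECong Erel a c) w X := by
    by_cases hc : c = 0
    · refine EqvGen.rel _ _ (Or.inr (EqvGen.trans _ _ _ hw0 (eCong_of_eq Erel ?_)))
      rw [hX, hc]; simp
    · refine EqvGen.rel _ _ (Or.inl ⟨b, t, c, lam • t + g, hc, hR,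
        notMem_suppE_add Erel (notMem_suppE_smul Erel lam (hadapted b t hR)) hg, hw0,
        eCong_of_eq Erel ?_⟩)
      rw [hX, add_smul]; abel
  exact EqvGen.trans _ _ _ hu' (EqvGen.symm _ _ hw')

end Aux

section Aux2
open Relation
lemma eqvGen_to_mem' {k : Type*} [CommRing k] {B : Type*}
    {N : Submodule k (B →₀ k)} {r : (B →₀ k) → (B →₀ k) → Prop}
    (hr : ∀ a b, r a b → a - b ∈ N) {u v : B →₀ k}
    (h : Relation.EqvGen r u v) : u - v ∈ N := by
  induction h with
  | rel a b h' => exact hr a b h'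
  | refl a => simp
  | symm a b _ ih => simpa [neg_sub] using N.neg_mem ih
  | trans a b c _ _ ih1 ih2 => simpa using N.add_mem ih1 ih2
end Aux2

/-- **Congruence via rewriting steps, positive rewriting steps, and the
presented quotient module agree.**  For a linear rewriting system modulo
`S = (B; R, E)` (with `R` left-monomial and `E`-adapted, `E` monomial
invertible), two vectors `u, v` are congruent via `S`-rewriting steps iff they
are congruent via positive `S`-rewriting steps, iff their images in the
quotient module `⟨B⟩_k / ⟨R ⊔ E⟩_k` coincide (i.e. `u − v ∈ ⟨R ⊔ E⟩_k`).
In particular the equivalence relations generated by all steps and by positive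
steps agree. -/
theorem stmt9 {k : Type*} [CommRing k] {B : Type*}
    (Rrel : B → (B →₀ k) → Prop) (Erel : B → B → kˣ → Prop)
    (hadapted : ∀ b t, Rrel b t → b ∉ SuppE Erel t) :
    ∀ u v : B →₀ k,
      (Relation.EqvGen (fun a c => SStepL Rrel Erel a c ∨ ECong Erel a c) u v ↔
        u - v ∈ NSub Rrel Erel) ∧
      (Relation.EqvGen (fun a c => PosStepL Rrel Erel a c ∨ ECong Erel a c) u v ↔
        u - v ∈ NSub Rrel Erel) := by
  intro u v
  have hPS : ∀ a c : B →₀ k, PosStepL Rrel Erel a c → SStepL Rrel Erel a c := by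
    rintro a c ⟨b, t, lam, w, hl, hR, _, h1, h2⟩
    exact ⟨b, t, lam, w, hl, hR, h1, h2⟩
  refine ⟨⟨fun h => ?_, fun h => mem_to_eqvGen Erel Rrel h⟩,
    ⟨fun h => ?_, fun h => ?_⟩⟩
  · exact eqvGen_to_mem' (fun a c hac => hac.elim (sStep_sub_mem Erel Rrel)
      (eCong_sub_mem Erel Rrel)) h
  · exact eqvGen_to_mem' (fun a c hac => hac.elim
      (fun hp => sStep_sub_mem Erel Rrel (hPS a c hp)) (eCong_sub_mem Erel Rrel)) h
  · exact eqvGen_lift (fun a c hac => hac.elim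
      (fun hs => sStep_to_pos Erel Rrel hadapted hs)
      (fun he => Relation.EqvGen.rel _ _ (Or.inr he))) (mem_to_eqvGen Erel Rrel h)
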